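/- Let c_1, …, c_T be a simplex coding in ℝ^{T−1}, T ≥ 2, and let ρ_1, …, ρ_T be nonnegative reals with ∑_{y=1}^T ρ_y = 1. Let b ∈ {1, …, T} satisfy ρ_b = max_y ρ_y. Then the code vector c_b minimizes over all α ∈ ℝ^{T−1} the SC-SVM conditional risk C(α) = ∑_{y=1}^T ρ_y ∑_{y' ≠ y} max(0, 1/(T−1) + ⟨c_{y'}, α⟩) (Fisher consistency of the simplex cone SVM loss: f_ρ = c_{b_ρ}). -/

import Mathlib

open scoped RealInnerProductSpace

/-- Fisher consistency of the simplex cone SVM loss: if `b` maximizes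
`y ↦ ρ y`, then the code vector `c b` minimizes over all `α ∈ ℝ^{T-1}` the SC-SVM
conditional risk `C(α) = ∑ y, ρ y ∑_{y' ≠ y} max(0, 1/(T-1) + ⟪c y', α⟫)`. -/
theorem simplex_cone_svm_fisher_consistency (T : ℕ) (hT : 2 ≤ T)
    (c : Fin T → EuclideanSpace ℝ (Fin (T - 1)))
    (hnorm : ∀ y, ‖c y‖ = 1)
    (hinner : ∀ y y', y ≠ y' → ⟪c y, c y'⟫ = -(1 / ((T : ℝ) - 1)))
    (hsum : ∑ y, c y = 0)
    (ρ : Fin T → ℝ) (hρ : ∀ y, 0 ≤ ρ y) (hρsum : ∑ y, ρ y = 1)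
    (b : Fin T) (hb : ∀ y, ρ y ≤ ρ b)
    (C : EuclideanSpace ℝ (Fin (T - 1)) → ℝ)
    (hC : ∀ α, C α = ∑ y, ρ y *
      ∑ y' ∈ Finset.univ.erase y, max 0 (1 / ((T : ℝ) - 1) + ⟪c y', α⟫)) :
    ∀ α : EuclideanSpace ℝ (Fin (T - 1)), C (c b) ≤ C α := by
  have hT1 : (0:ℝ) < (T:ℝ) - 1 := by
    have : (2:ℝ) ≤ (T:ℝ) := by exact_mod_cast hT
    linarith
  set t : ℝ := 1 / ((T:ℝ) - 1) with ht
  have ht0 : 0 < t := by positivity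
  have hρb1 : ρ b ≤ 1 := by
    calc ρ b ≤ ∑ y, ρ y := Finset.single_le_sum (fun y _ => hρ y) (Finset.mem_univ b)
    _ = 1 := hρsum
  -- rewrite C in the convenient form
  have key : ∀ β, C β = ∑ y, (1 - ρ y) * max 0 (t + ⟪c y, β⟫) := by
    intro β
    rw [hC]
    have herase : ∀ y : Fin T, ∑ y' ∈ Finset.univ.erase y, max 0 (t + ⟪c y', β⟫)
        = (∑ y', max 0 (t + ⟪c y', β⟫)) - max 0 (t + ⟪c y, β⟫) := fun y =>
      Finset.sum_erase_eq_sub (Finset.mem_univ y)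
    simp_rw [herase, mul_sub, sub_mul, one_mul, Finset.sum_sub_distrib,
      ← Finset.sum_mul, hρsum, one_mul]
  -- value at the code vector
  have hCb : C (c b) = (1 - ρ b) * (1 + t) := by
    rw [key]
    have hval : ∀ y, max 0 (t + ⟪c y, c b⟫) = if y = b then 1 + t else 0 := by
      intro y
      by_cases hy : y = b
      · subst hy
        have : ⟪c y, c y⟫ = 1 := by
          rw [real_inner_self_eq_norm_sq, hnorm]; norm_num
        rw [this, if_pos rfl, max_eq_right (by linarith), add_comm]
      · rw [hinner y b hy, if_neg hy]
        simp
    simp_rw [hval]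
    simp
  -- lower bound for general α
  have hlb : ∀ β, (1 - ρ b) * (1 + t) ≤ C β := by
    intro β
    rw [key]
    have hsumS : ∑ y, (t + ⟪c y, β⟫) = 1 + t := by
      rw [Finset.sum_add_distrib]
      have h0 : ∑ y : Fin T, ⟪c y, β⟫ = 0 := by
        rw [← sum_inner, hsum, inner_zero_left]
      rw [h0, Finset.sum_const, add_zero, Finset.card_univ, Fintype.card_fin, ht]
      rw [nsmul_eq_mul]
      field_simp
      ring
    calc (1 - ρ b) * (1 + t) = ∑ y, (1 - ρ b) * (t + ⟪c y, β⟫) := by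
          rw [← Finset.mul_sum, hsumS]
      _ ≤ ∑ y, (1 - ρ y) * max 0 (t + ⟪c y, β⟫) := by
          apply Finset.sum_le_sum
          intro y _
          have h1 : t + ⟪c y, β⟫ ≤ max 0 (t + ⟪c y, β⟫) := le_max_right _ _
          have h2 : (0:ℝ) ≤ max 0 (t + ⟪c y, β⟫) := le_max_left _ _
          nlinarith [hb y, hρ y]
  intro α
  rw [hCb]
  exact hlb α
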